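/- (Policy iteration for linear systems = Kleinman iteration) Let A ∈ ℝ^{n×n}, B ∈ ℝ^{n×m}, Q = Qᵀ > 0, R = Rᵀ > 0, and let K₀ be such that A + BK₀ is Hurwitz. Define iteratively: P_i as the unique symmetric solution of the Lyapunov equation P_i(A + BK_i) + (A + BK_i)ᵀP_i = -Q - K_iᵀRK_i, and K_{i+1} = -R⁻¹BᵀP_i. Then each P_i is symmetric positive definite, and each A + BK_{i+1} is Hurwitz, so the iteration is well-defined for all i. -/

import Mathlib

open Matrix

/-- A real square matrix is Hurwitz if all its (complex) eigenvalues have negative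
real part. -/
def IsHurwitz {n : ℕ} (M : Matrix (Fin n) (Fin n) ℝ) : Prop :=
  ∀ μ ∈ spectrum ℂ (M.map (algebraMap ℝ ℂ)), μ.re < 0

open NormedSpace Filter Topology

namespace KleinmanAux

variable {n : ℕ}

lemma re_quad (X : Matrix (Fin n) (Fin n) ℝ) (u : Fin n → ℂ) :
    (star u ⬝ᵥ (X.map (algebraMap ℝ ℂ)) *ᵥ u).re =
      (fun j => (u j).re) ⬝ᵥ X *ᵥ (fun j => (u j).re) +
      (fun j => (u j).im) ⬝ᵥ X *ᵥ (fun j => (u j).im) := by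
  simp only [dotProduct, mulVec, Matrix.map_apply, Pi.star_apply]
  rw [Complex.re_sum, ← Finset.sum_add_distrib]
  refine Finset.sum_congr rfl fun j _ => ?_
  simp only [Finset.mul_sum, Complex.re_sum]
  rw [← Finset.sum_add_distrib]
  refine Finset.sum_congr rfl fun k _ => ?_
  simp [Complex.mul_re, Complex.mul_im, RCLike.star_def]

lemma re_quad_pos {X : Matrix (Fin n) (Fin n) ℝ} (hX : X.PosDef) {u : Fin n → ℂ}
    (hu : u ≠ 0) : 0 < (star u ⬝ᵥ (X.map (algebraMap ℝ ℂ)) *ᵥ u).re := by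
  rw [re_quad]
  set a : Fin n → ℝ := fun j => (u j).re with ha
  set b : Fin n → ℝ := fun j => (u j).im with hb
  have hab : a ≠ 0 ∨ b ≠ 0 := by
    by_contra hcon
    push_neg at hcon
    apply hu
    funext j
    have h1 := congrFun hcon.1 j
    have h2 := congrFun hcon.2 j
    simp only [ha, hb, Pi.zero_apply] at h1 h2
    exact Complex.ext h1 h2
  have hA : ∀ v : Fin n → ℝ, v ≠ 0 → 0 < v ⬝ᵥ X *ᵥ v := by
    intro v hv
    simpa using hX.dotProduct_mulVec_pos hv
  have hA0 : ∀ v : Fin n → ℝ, 0 ≤ v ⬝ᵥ X *ᵥ v := by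
    intro v
    rcases eq_or_ne v 0 with rfl | hv
    · simp
    · exact (hA v hv).le
  rcases hab with h | h
  · linarith [hA a h, hA0 b]
  · linarith [hA0 a, hA b h]

lemma hurwitz_of_lyap {M P T : Matrix (Fin n) (Fin n) ℝ}
    (hP : P.PosDef) (hT : T.PosDef)
    (h : P * M + Mᵀ * P = -T) : IsHurwitz M := by
  intro μ hμ
  set Mc := M.map (algebraMap ℝ ℂ) with hMc
  rw [spectrum.mem_iff] at hμ
  have h1 : ¬ IsUnit (Mc - μ • 1) := by
    intro hcon
    apply hμ
    have : algebraMap ℂ (Matrix (Fin n) (Fin n) ℂ) μ - Mc = -(Mc - μ • 1) := by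
      simp [Algebra.algebraMap_eq_smul_one]
    rw [this]
    exact hcon.neg
  have hdet : (Mc - μ • 1).det = 0 := by
    by_contra hd
    exact h1 ((Matrix.isUnit_iff_isUnit_det _).2 (isUnit_iff_ne_zero.2 hd))
  obtain ⟨u, hu0, hu⟩ := (Matrix.exists_mulVec_eq_zero_iff).2 hdet
  rw [Matrix.sub_mulVec] at hu
  have heig : Mc *ᵥ u = μ • u := by
    have h2 : (μ • (1 : Matrix (Fin n) (Fin n) ℂ)) *ᵥ u = μ • u := by
      simp [Matrix.smul_mulVec]
    rw [h2] at hu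
    exact sub_eq_zero.1 hu
  set Pc := P.map (algebraMap ℝ ℂ) with hPc
  set Tc := T.map (algebraMap ℝ ℂ) with hTc
  have hstar : Mc *ᵥ star u = star (Mc *ᵥ u) := by
    funext j
    simp only [Matrix.mulVec, dotProduct, Pi.star_apply]
    rw [star_sum]
    refine Finset.sum_congr rfl fun k _ => ?_
    simp [hMc, Matrix.map_apply, mul_comm]
  have key : (μ + (starRingEnd ℂ) μ) * (star u ⬝ᵥ Pc *ᵥ u) = - (star u ⬝ᵥ Tc *ᵥ u) := by
    have hmap := congrArg
      (fun X : Matrix (Fin n) (Fin n) ℝ => star u ⬝ᵥ (X.map (algebraMap ℝ ℂ)) *ᵥ u) h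
    have hL : ((P * M + Mᵀ * P).map (algebraMap ℝ ℂ)) = Pc * Mc + Mcᵀ * Pc := by
      have : ((algebraMap ℝ ℂ).mapMatrix (P * M + Mᵀ * P) :
          Matrix (Fin n) (Fin n) ℂ) = Pc * Mc + Mcᵀ * Pc := by
        rw [map_add, _root_.map_mul, _root_.map_mul]
        simp [RingHom.mapMatrix_apply, hPc, hMc, Matrix.transpose_map]
      simpa [RingHom.mapMatrix_apply] using this
    have hR : ((-T).map (algebraMap ℝ ℂ)) = -Tc := by
      have : ((algebraMap ℝ ℂ).mapMatrix (-T) : Matrix (Fin n) (Fin n) ℂ) = -Tc := by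
        rw [map_neg]; simp [RingHom.mapMatrix_apply, hTc]
      simpa [RingHom.mapMatrix_apply] using this
    rw [hL, hR] at hmap
    rw [Matrix.add_mulVec, dotProduct_add] at hmap
    have t1 : star u ⬝ᵥ (Pc * Mc) *ᵥ u = μ * (star u ⬝ᵥ Pc *ᵥ u) := by
      rw [← Matrix.mulVec_mulVec, heig, Matrix.mulVec_smul, dotProduct_smul]
      simp [smul_eq_mul]
    have t2 : star u ⬝ᵥ (Mcᵀ * Pc) *ᵥ u = (starRingEnd ℂ) μ * (star u ⬝ᵥ Pc *ᵥ u) := by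
      rw [← Matrix.mulVec_mulVec, Matrix.dotProduct_mulVec, Matrix.vecMul_transpose,
        hstar, heig]
      rw [star_smul, smul_dotProduct]
      simp [smul_eq_mul]
    rw [t1, t2] at hmap
    rw [Matrix.neg_mulVec, dotProduct_neg] at hmap
    rw [add_mul]
    exact hmap
  have hq := re_quad_pos hP hu0
  have ht := re_quad_pos hT hu0
  rw [← hPc] at hq
  rw [← hTc] at ht
  have hre := congrArg Complex.re key
  rw [Complex.add_conj, Complex.re_ofReal_mul, Complex.neg_re] at hre
  nlinarith


lemma tendsto_pow_mul_exp_zero (k : ℕ) {a : ℝ} (ha : a < 0) :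
    Tendsto (fun t : ℝ => t ^ k * Real.exp (a * t)) atTop (𝓝 0) := by
  have h1 : Tendsto (fun t : ℝ => (-a) * t) atTop atTop :=
    Tendsto.const_mul_atTop (by linarith) tendsto_id
  have h2 := (Real.tendsto_pow_mul_exp_neg_atTop_nhds_zero k).comp h1
  have h3 : Tendsto (fun t : ℝ => ((-a)⁻¹) ^ k * ((-a * t) ^ k * Real.exp (-(-a * t))))
      atTop (𝓝 (((-a)⁻¹) ^ k * 0)) := h2.const_mul _
  rw [mul_zero] at h3
  refine h3.congr fun t => ?_
  have he : -(-a * t) = a * t := by ring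
  rw [he, ← mul_assoc, ← mul_pow, inv_mul_cancel_left₀ (by linarith : (-a) ≠ 0)]

lemma decay_gen_eig (N : Matrix (Fin n) (Fin n) ℂ) (μ : ℂ) (hμ : μ.re < 0)
    (v : Fin n → ℂ) (K : ℕ) (hv : ((N - μ • 1) ^ K) *ᵥ v = 0) :
    Tendsto (fun t : ℝ => exp (t • N) *ᵥ v) atTop (𝓝 0) := by
  letI : SeminormedRing (Matrix (Fin n) (Fin n) ℂ) := Matrix.linftyOpSemiNormedRing
  letI : NormedRing (Matrix (Fin n) (Fin n) ℂ) := Matrix.linftyOpNormedRing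
  letI : NormedAlgebra ℂ (Matrix (Fin n) (Fin n) ℂ) := Matrix.linftyOpNormedAlgebra
  letI : NormedAlgebra ℚ (Matrix (Fin n) (Fin n) ℂ) := NormedAlgebra.restrictScalars ℚ ℂ _
  set W := N - μ • (1 : Matrix (Fin n) (Fin n) ℂ) with hW
  have hsm : ∀ t : ℝ, ∀ X : Matrix (Fin n) (Fin n) ℂ, t • X = (t : ℂ) • X := by
    intro t X
    exact (algebraMap_smul ℂ t X).symm
  -- splitting of the exponential
  have hsplit : ∀ t : ℝ, exp (t • N) = Complex.exp (t * μ) • exp ((t : ℂ) • W) := by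
    intro t
    have h1 : ((t : ℂ) * μ) • (1 : Matrix (Fin n) (Fin n) ℂ) = t • (μ • 1) := by
      rw [← smul_smul, ← hsm]
    have hdecomp : t • N = algebraMap ℂ (Matrix (Fin n) (Fin n) ℂ) ((t : ℂ) * μ)
        + t • W := by
      rw [hW, Algebra.algebraMap_eq_smul_one, h1, smul_sub]
      abel
    erw [hdecomp, NormedSpace.exp_add_of_commute (Algebra.commute_algebraMap_left _ _),
      ← algebraMap_exp_comm, ← Complex.exp_eq_exp_ℂ, Algebra.algebraMap_eq_smul_one,
      smul_mul_assoc, one_mul, hsm]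
    rfl
  -- the truncated series
  have hfin : ∀ t : ℝ, exp ((t : ℂ) • W) *ᵥ v
      = ∑ k ∈ Finset.range K, (((Nat.factorial k : ℂ))⁻¹ * (t : ℂ) ^ k) • (W ^ k *ᵥ v) := by
    intro t
    have hL : ∃ L : Matrix (Fin n) (Fin n) ℂ →L[ℂ] (Fin n → ℂ),
        ∀ A : Matrix (Fin n) (Fin n) ℂ, L A = A *ᵥ v := by
      refine ⟨LinearMap.toContinuousLinearMap
        { toFun := fun A : Matrix (Fin n) (Fin n) ℂ => A *ᵥ v
          map_add' := fun A B => Matrix.add_mulVec A B v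
          map_smul' := fun c A => Matrix.smul_mulVec c A v }, fun A => rfl⟩
    obtain ⟨L, hLa⟩ := hL
    have hs := (exp_series_hasSum_exp' (𝕂 := ℂ) ((t : ℂ) • W)).mapL L
    simp only [hLa] at hs
    have hterm : ∀ k : ℕ, ((Nat.factorial k : ℂ)⁻¹ • ((t : ℂ) • W) ^ k) *ᵥ v
        = (((Nat.factorial k : ℂ))⁻¹ * (t : ℂ) ^ k) • (W ^ k *ᵥ v) := by
      intro k
      rw [smul_pow, smul_smul, Matrix.smul_mulVec]
    simp only [hterm] at hs
    have hzero : ∀ k ∉ Finset.range K, (((Nat.factorial k : ℂ))⁻¹ * (t : ℂ) ^ k) • (W ^ k *ᵥ v) = 0 := by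
      intro k hk
      rw [Finset.mem_range, not_lt] at hk
      have hWk : W ^ k *ᵥ v = 0 := by
        have hsplitpow : W ^ k = W ^ (k - K) * W ^ K := by
          rw [← pow_add]
          congr 1
          omega
        rw [hsplitpow, ← Matrix.mulVec_mulVec, hv, Matrix.mulVec_zero]
      rw [hWk, smul_zero]
    exact hs.unique (hasSum_sum_of_ne_finset_zero hzero)
  -- the squeeze
  have hnorm : ∀ t : ℝ, 0 ≤ t → ‖exp (t • N) *ᵥ v‖
      ≤ ∑ k ∈ Finset.range K, (t ^ k * Real.exp (μ.re * t)) * (((Nat.factorial k : ℝ))⁻¹ * ‖W ^ k *ᵥ v‖) := by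
    intro t ht
    rw [hsplit, Matrix.smul_mulVec, hfin]
    rw [norm_smul]
    have habs : ‖Complex.exp (↑t * μ)‖ = Real.exp (μ.re * t) := by
      rw [Complex.norm_exp, Complex.re_ofReal_mul, mul_comm]
    rw [habs]
    refine le_trans (mul_le_mul_of_nonneg_left (norm_sum_le _ _) (Real.exp_nonneg _)) ?_
    rw [Finset.mul_sum]
    refine Finset.sum_le_sum fun k _ => ?_
    rw [norm_smul, norm_mul, norm_inv, norm_pow]
    have h1 : ‖((Nat.factorial k : ℂ))‖ = (Nat.factorial k : ℝ) := by
      rw [Complex.norm_natCast]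
    have h2 : ‖(t : ℂ)‖ = t := by
      rw [Complex.norm_real, Real.norm_eq_abs, abs_of_nonneg ht]
    rw [h1, h2]
    ring_nf
    exact le_refl _
  have hg : Tendsto (fun t : ℝ => ∑ k ∈ Finset.range K,
      (t ^ k * Real.exp (μ.re * t)) * (((Nat.factorial k : ℝ))⁻¹ * ‖W ^ k *ᵥ v‖)) atTop (𝓝 0) := by
    have : (0 : ℝ) = ∑ k ∈ Finset.range K, 0 * (((Nat.factorial k : ℝ))⁻¹ * ‖W ^ k *ᵥ v‖) := by simp
    rw [this]
    refine tendsto_finset_sum _ fun k _ => ?_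
    exact (tendsto_pow_mul_exp_zero k hμ).mul_const _
  refine squeeze_zero_norm' ?_ hg
  filter_upwards [eventually_ge_atTop (0 : ℝ)] with t ht
  exact hnorm t ht


lemma decay_complex {M : Matrix (Fin n) (Fin n) ℝ} (hM : IsHurwitz M) (v : Fin n → ℂ) :
    Tendsto (fun t : ℝ => exp (t • M.map (algebraMap ℝ ℂ)) *ᵥ v) atTop (𝓝 0) := by
  set Mc := M.map (algebraMap ℝ ℂ) with hMc
  set f : Module.End ℂ (Fin n → ℂ) := Matrix.toLinAlgEquiv' Mc with hf
  have htop : ⨆ μ : ℂ, f.maxGenEigenspace μ = ⊤ :=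
    Module.End.iSup_maxGenEigenspace_eq_top f
  have hv : v ∈ ⨆ μ : ℂ, f.maxGenEigenspace μ := by rw [htop]; trivial
  refine Submodule.iSup_induction
    (motive := fun w => Tendsto (fun t : ℝ => exp (t • Mc) *ᵥ w) atTop (𝓝 0)) _ hv ?_ ?_ ?_
  case refine_2 =>
    simpa using (tendsto_const_nhds : Tendsto (fun _ : ℝ => (0 : Fin n → ℂ)) atTop (𝓝 0))
  case refine_3 =>
    intro x y hx hy
    have := hx.add hy
    simp only [Matrix.mulVec_add, add_zero] at this ⊢
    simpa using this
  intro μ x hx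
  rw [Module.End.mem_maxGenEigenspace] at hx
  obtain ⟨k, hk⟩ := hx
  rcases eq_or_ne x 0 with rfl | hx0
  · simpa using (tendsto_const_nhds : Tendsto (fun _ : ℝ => (0 : Fin n → ℂ)) atTop (𝓝 0))

  have hk' : ((Mc - μ • 1) ^ k) *ᵥ x = 0 := by
    have : ((Matrix.toLinAlgEquiv' ((Mc - μ • 1) ^ k)) : (Fin n → ℂ) →ₗ[ℂ] (Fin n → ℂ)) x
        = ((f - μ • 1) ^ k) x := by
      rw [map_pow, map_sub, _root_.map_smul, _root_.map_one, hf]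
    rw [Matrix.toLinAlgEquiv'_apply] at this
    rw [this, hk]
  have hspec : μ ∈ spectrum ℂ Mc := by
    by_contra hs
    rw [spectrum.notMem_iff] at hs
    have hneg : -(algebraMap ℂ (Matrix (Fin n) (Fin n) ℂ) μ - Mc) = Mc - μ • 1 := by
      simp [Algebra.algebraMap_eq_smul_one]
    have hu : IsUnit ((Mc - μ • 1) ^ k) := (hneg ▸ hs.neg).pow k
    obtain ⟨U, hU⟩ := hu
    apply hx0
    calc x = (1 : Matrix (Fin n) (Fin n) ℂ) *ᵥ x := (Matrix.one_mulVec x).symm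
    _ = ((↑U⁻¹ : Matrix (Fin n) (Fin n) ℂ) * ↑U) *ᵥ x := by rw [Units.inv_mul]
    _ = (↑U⁻¹ : Matrix (Fin n) (Fin n) ℂ) *ᵥ (((Mc - μ • 1) ^ k) *ᵥ x) := by
        rw [← Matrix.mulVec_mulVec, hU]
    _ = 0 := by rw [hk', Matrix.mulVec_zero]
  exact decay_gen_eig Mc μ (hM μ hspec) x k hk'

lemma hurwitz_decay {M : Matrix (Fin n) (Fin n) ℝ} (hM : IsHurwitz M) (x : Fin n → ℝ) :
    Tendsto (fun t : ℝ => exp (t • M) *ᵥ x) atTop (𝓝 0) := by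
  set Mc := M.map (algebraMap ℝ ℂ) with hMc
  have hmap : ∀ t : ℝ, (exp (t • M)).map (algebraMap ℝ ℂ) = exp (t • Mc) := by
    intro t
    letI : SeminormedRing (Matrix (Fin n) (Fin n) ℝ) := Matrix.linftyOpSemiNormedRing
    letI : NormedRing (Matrix (Fin n) (Fin n) ℝ) := Matrix.linftyOpNormedRing
    letI : NormedAlgebra ℝ (Matrix (Fin n) (Fin n) ℝ) := Matrix.linftyOpNormedAlgebra
    letI : SeminormedRing (Matrix (Fin n) (Fin n) ℂ) := Matrix.linftyOpSemiNormedRing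
    letI : NormedRing (Matrix (Fin n) (Fin n) ℂ) := Matrix.linftyOpNormedRing
    letI : NormedAlgebra ℝ (Matrix (Fin n) (Fin n) ℂ) := Matrix.linftyOpNormedAlgebra
    letI : NormedAlgebra ℂ (Matrix (Fin n) (Fin n) ℂ) := Matrix.linftyOpNormedAlgebra
    letI : NormedAlgebra ℚ (Matrix (Fin n) (Fin n) ℝ) := NormedAlgebra.restrictScalars ℚ ℝ _
    have hcont : Continuous ((algebraMap ℝ ℂ).mapMatrix :
        Matrix (Fin n) (Fin n) ℝ →+* Matrix (Fin n) (Fin n) ℂ) := by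
      have heq : ((algebraMap ℝ ℂ).mapMatrix :
          Matrix (Fin n) (Fin n) ℝ → Matrix (Fin n) (Fin n) ℂ)
          = fun A => A.map (algebraMap ℝ ℂ) := by
        funext A
        rfl
      rw [heq]
      refine Continuous.matrix_map continuous_id ?_
      rw [Complex.coe_algebraMap]
      exact Complex.continuous_ofReal
    have h1 := map_exp ((algebraMap ℝ ℂ).mapMatrix :
        Matrix (Fin n) (Fin n) ℝ →+* Matrix (Fin n) (Fin n) ℂ) hcont (t • M)
    rw [RingHom.mapMatrix_apply] at h1
    have h2 : ((algebraMap ℝ ℂ).mapMatrix (t • M) : Matrix (Fin n) (Fin n) ℂ) = t • Mc := by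
      rw [RingHom.mapMatrix_apply]
      exact Matrix.map_smul _ t (fun a => by simp [Algebra.algebraMap_self]) M
    rw [h2] at h1
    exact h1
  have hC := decay_complex hM (fun j => (x j : ℂ))
  rw [tendsto_pi_nhds]
  intro j
  have hj : ∀ t : ℝ, ((exp (t • M) *ᵥ x) j : ℂ) = (exp (t • Mc) *ᵥ (fun j => (x j : ℂ))) j := by
    intro t
    have := RingHom.map_mulVec (algebraMap ℝ ℂ) (exp (t • M)) x j
    rw [hmap] at this
    rw [Complex.coe_algebraMap] at this
    have h3 : ((algebraMap ℝ ℂ) ∘ x) = (fun j => ((x j : ℝ) : ℂ)) := rfl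
    calc ((exp (t • M) *ᵥ x) j : ℂ) = (exp (t • Mc) *ᵥ ⇑(algebraMap ℝ ℂ) ∘ x) j := this
    _ = (exp (t • Mc) *ᵥ fun j => ((x j : ℝ) : ℂ)) j := by rw [h3]
  have h2 : Tendsto (fun t : ℝ => ((exp (t • M) *ᵥ x) j : ℂ)) atTop (𝓝 0) := by
    simp only [hj]
    exact (tendsto_pi_nhds.1 hC j)
  have := (Complex.continuous_re.tendsto 0).comp h2
  simpa [Function.comp_def] using this


lemma lyap_posdef {M P S : Matrix (Fin n) (Fin n) ℝ} (hM : IsHurwitz M)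
    (hP : P.IsSymm) (hS : S.PosDef) (h : P * M + Mᵀ * P = -S) : P.PosDef := by
  letI : SeminormedRing (Matrix (Fin n) (Fin n) ℝ) := Matrix.linftyOpSemiNormedRing
  letI : NormedRing (Matrix (Fin n) (Fin n) ℝ) := Matrix.linftyOpNormedRing
  letI : NormedAlgebra ℝ (Matrix (Fin n) (Fin n) ℝ) := Matrix.linftyOpNormedAlgebra
  letI : NormedAlgebra ℚ (Matrix (Fin n) (Fin n) ℝ) := NormedAlgebra.restrictScalars ℚ ℝ _
  rw [Matrix.posDef_iff_dotProduct_mulVec]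
  constructor
  · ext i j
    rw [Matrix.conjTranspose_apply, star_trivial]
    calc P j i = Pᵀ i j := (Matrix.transpose_apply P i j).symm
    _ = P i j := congrFun (congrFun hP i) j
  intro x hx
  set xt : ℝ → (Fin n → ℝ) := fun t => exp (t • M) *ᵥ x with hxt
  set V : ℝ → ℝ := fun t => xt t ⬝ᵥ (P *ᵥ xt t) with hV
  -- a continuous linear map
  obtain ⟨L, hLa⟩ : ∃ L : Matrix (Fin n) (Fin n) ℝ →L[ℝ] (Fin n → ℝ),
      ∀ A : Matrix (Fin n) (Fin n) ℝ, L A = A *ᵥ x := by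
    refine ⟨LinearMap.toContinuousLinearMap
      { toFun := fun A : Matrix (Fin n) (Fin n) ℝ => A *ᵥ x
        map_add' := fun A B => Matrix.add_mulVec A B x
        map_smul' := fun c A => Matrix.smul_mulVec c A x }, fun A => rfl⟩
  have hxd : ∀ t : ℝ, HasDerivAt xt (M *ᵥ xt t) t := by
    intro t
    have h1 := hasDerivAt_exp_smul_const' (𝕂 := ℝ) M t
    have h2 := (L.hasFDerivAt.comp_hasDerivAt t h1)
    have h3 : L (M * exp (t • M)) = M *ᵥ xt t := by
      rw [hLa, ← Matrix.mulVec_mulVec]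
    erw [h3] at h2
    have h4 : (⇑L ∘ fun u : ℝ => exp (u • M)) = xt := by
      funext s
      simp only [Function.comp_apply, hLa, hxt]
    erw [h4] at h2
    exact h2
  -- nonvanishing of trajectories
  have hy0 : ∀ t : ℝ, xt t ≠ 0 := by
    intro t hcon
    apply hx
    obtain ⟨U, hU⟩ := Matrix.isUnit_exp (t • M)
    calc x = (1 : Matrix (Fin n) (Fin n) ℝ) *ᵥ x := (Matrix.one_mulVec x).symm
    _ = ((↑U⁻¹ : Matrix (Fin n) (Fin n) ℝ) * ↑U) *ᵥ x := by rw [Units.inv_mul]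
    _ = (↑U⁻¹ : Matrix (Fin n) (Fin n) ℝ) *ᵥ (exp (t • M) *ᵥ x) := by
        rw [← Matrix.mulVec_mulVec, hU]
    _ = 0 := by
        have : exp (t • M) *ᵥ x = xt t := rfl
        rw [this, hcon, Matrix.mulVec_zero]
  -- derivative of V
  have hVd : ∀ t : ℝ, HasDerivAt V (-(xt t ⬝ᵥ S *ᵥ xt t)) t := by
    intro t
    have hco : ∀ j : Fin n, HasDerivAt (fun s => xt s j) ((M *ᵥ xt t) j) t := by
      intro j
      exact ((ContinuousLinearMap.proj (R := ℝ) (φ := fun _ : Fin n => ℝ)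
        j).hasFDerivAt.comp_hasDerivAt t (hxd t))
    have hVeq : V = fun s => ∑ j, ∑ k, xt s j * (P j k * xt s k) := by
      funext s
      simp only [hV, dotProduct, mulVec, Finset.mul_sum]
    rw [hVeq]
    have hsum : HasDerivAt (fun s => ∑ j, ∑ k, xt s j * (P j k * xt s k))
        (∑ j, ∑ k, ((M *ᵥ xt t) j * (P j k * xt t k)
          + xt t j * (P j k * (M *ᵥ xt t) k))) t := by
      refine HasDerivAt.fun_sum fun j _ => ?_
      refine HasDerivAt.fun_sum fun k _ => ?_
      exact (hco j).mul ((hco k).const_mul (P j k))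
    have hval : (∑ j, ∑ k, ((M *ᵥ xt t) j * (P j k * xt t k)
        + xt t j * (P j k * (M *ᵥ xt t) k)))
        = -(xt t ⬝ᵥ S *ᵥ xt t) := by
      have e1 : (∑ j, ∑ k, ((M *ᵥ xt t) j * (P j k * xt t k)
          + xt t j * (P j k * (M *ᵥ xt t) k)))
          = (M *ᵥ xt t) ⬝ᵥ (P *ᵥ xt t) + xt t ⬝ᵥ (P *ᵥ (M *ᵥ xt t)) := by
        simp only [dotProduct, mulVec, Finset.mul_sum, Finset.sum_add_distrib]
      rw [e1]
      have e2 : (M *ᵥ xt t) ⬝ᵥ (P *ᵥ xt t) = xt t ⬝ᵥ ((Mᵀ * P) *ᵥ xt t) := by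
        rw [← Matrix.vecMul_transpose, ← Matrix.dotProduct_mulVec, Matrix.mulVec_mulVec]
      have e3 : xt t ⬝ᵥ (P *ᵥ (M *ᵥ xt t)) = xt t ⬝ᵥ ((P * M) *ᵥ xt t) := by
        rw [Matrix.mulVec_mulVec]
      rw [e2, e3, ← dotProduct_add, ← Matrix.add_mulVec]
      rw [show Mᵀ * P + (P * M) = P * M + Mᵀ * P from add_comm _ _, h]
      rw [Matrix.neg_mulVec, dotProduct_neg]
    rw [← hval]
    exact hsum
  -- V is strictly decreasing
  have hmono : StrictAnti V := by
    refine strictAnti_of_deriv_neg fun t => ?_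
    rw [(hVd t).deriv]
    have := hS.dotProduct_mulVec_pos (hy0 t)
    simp only [star_trivial] at this
    linarith
  -- V tends to 0
  have hV0 : Tendsto V atTop (𝓝 0) := by
    have hF : Continuous (fun y : Fin n → ℝ => y ⬝ᵥ P *ᵥ y) := by
      simp only [dotProduct, mulVec]
      exact continuous_finset_sum _ fun j _ => (continuous_apply j).mul
        (continuous_finset_sum _ fun k _ => continuous_const.mul (continuous_apply k))
    have := (hF.tendsto 0).comp (hurwitz_decay hM x)
    simp at this
    with_unfolding_all exact this
  -- conclude
  have hnonneg : ∀ t : ℝ, 0 ≤ V t := by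
    intro t
    refine le_of_tendsto (f := V) hV0 ?_
    filter_upwards [eventually_ge_atTop t] with s hs
    exact hmono.antitone hs
  have h10 : V 1 < V 0 := hmono (by norm_num)
  have hV00 : V 0 = x ⬝ᵥ P *ᵥ x := by
    have : xt 0 = x := by
      simp only [hxt, zero_smul, NormedSpace.exp_zero, Matrix.one_mulVec]
    simp only [hV, this]
  rw [star_trivial]
  rw [← hV00]
  linarith [hnonneg 1]


end KleinmanAux

/-- **Policy iteration for linear systems (Kleinman iteration).** With `Q, R` symmetric
positive definite, `K₀` stabilizing, `P_i` the symmetric solution of the Lyapunov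
equation `P_i(A+BK_i) + (A+BK_i)ᵀP_i = -Q - K_iᵀRK_i` and `K_{i+1} = -R⁻¹BᵀP_i`,
every `P_i` is positive definite and every `A + BK_{i+1}` is Hurwitz, so the
iteration is well-defined for all `i`. -/
theorem kleinman_iteration_well_defined {n m : ℕ}
    (A : Matrix (Fin n) (Fin n) ℝ) (B : Matrix (Fin n) (Fin m) ℝ)
    (Q : Matrix (Fin n) (Fin n) ℝ) (R : Matrix (Fin m) (Fin m) ℝ)
    (hQ : Q.PosDef) (hR : R.PosDef)
    (K : ℕ → Matrix (Fin m) (Fin n) ℝ) (P : ℕ → Matrix (Fin n) (Fin n) ℝ)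
    (hK0 : IsHurwitz (A + B * K 0))
    (hPsymm : ∀ i, (P i).IsSymm)
    (hLyap : ∀ i, P i * (A + B * K i) + (A + B * K i)ᵀ * P i = -(Q + (K i)ᵀ * R * K i))
    (hKupd : ∀ i, K (i + 1) = -(R⁻¹ * Bᵀ * P i)) :
    ∀ i, (P i).PosDef ∧ IsHurwitz (A + B * K (i + 1)) := by
  have hRsymm : Rᵀ = R := by
    have := hR.1
    rwa [Matrix.IsHermitian, Matrix.conjTranspose_eq_transpose_of_trivial] at this
  have hsemi : ∀ (C : Matrix (Fin m) (Fin n) ℝ), (Cᵀ * R * C).PosSemidef := by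
    intro C
    have := hR.posSemidef.conjTranspose_mul_mul_same C
    rwa [Matrix.conjTranspose_eq_transpose_of_trivial] at this
  have hstep : ∀ i, IsHurwitz (A + B * K i) →
      (P i).PosDef ∧ IsHurwitz (A + B * K (i + 1)) := by
    intro i hH
    have hS : (Q + (K i)ᵀ * R * K i).PosDef := hQ.add_posSemidef (hsemi (K i))
    have hPi : (P i).PosDef := KleinmanAux.lyap_posdef hH (hPsymm i) hS (hLyap i)
    refine ⟨hPi, ?_⟩
    have hRdet : IsUnit R.det := isUnit_iff_ne_zero.2 hR.det_pos.ne'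
    have hRR : R * R⁻¹ = 1 := Matrix.mul_nonsing_inv R hRdet
    have hK' : K (i + 1) = -(R⁻¹ * Bᵀ * P i) := hKupd i
    have hBtP : Bᵀ * P i = -(R * K (i + 1)) := by
      rw [hK', Matrix.mul_neg, neg_neg, ← Matrix.mul_assoc, ← Matrix.mul_assoc, hRR,
        Matrix.one_mul]
    have hPB : P i * B = -((K (i + 1))ᵀ * R) := by
      have h2 := congrArg Matrix.transpose hBtP
      rw [Matrix.transpose_mul, Matrix.transpose_neg, Matrix.transpose_mul,
        Matrix.transpose_transpose, (hPsymm i).eq, hRsymm] at h2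
      exact h2
    have hT : P i * (A + B * K (i + 1)) + (A + B * K (i + 1))ᵀ * P i
        = -(Q + (K (i + 1) - K i)ᵀ * R * (K (i + 1) - K i)
            + (K (i + 1))ᵀ * R * K (i + 1)) := by
      have e : P i * (A + B * K (i + 1)) + (A + B * K (i + 1))ᵀ * P i
          = (P i * (A + B * K i) + (A + B * K i)ᵀ * P i)
            + (P i * B) * (K (i + 1) - K i)
            + (K (i + 1) - K i)ᵀ * (Bᵀ * P i) := by
        simp only [Matrix.transpose_add, Matrix.transpose_mul, Matrix.transpose_sub,
          Matrix.mul_add, Matrix.add_mul, Matrix.mul_sub, Matrix.sub_mul, Matrix.mul_assoc]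
        abel
      rw [e, hLyap i, hPB, hBtP]
      simp only [Matrix.transpose_sub, Matrix.transpose_mul, Matrix.neg_mul, Matrix.mul_neg,
        Matrix.mul_add, Matrix.add_mul, Matrix.mul_sub, Matrix.sub_mul, Matrix.mul_assoc,
        neg_add_rev, neg_neg, neg_sub]
      abel
    have hTpos : (Q + (K (i + 1) - K i)ᵀ * R * (K (i + 1) - K i)
        + (K (i + 1))ᵀ * R * K (i + 1)).PosDef :=
      (hQ.add_posSemidef (hsemi _)).add_posSemidef (hsemi _)
    exact KleinmanAux.hurwitz_of_lyap hPi hTpos hT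
  intro i
  induction i with
  | zero => exact hstep 0 hK0
  | succ k ih => exact hstep (k + 1) ih.2
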